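/- For all nonnegative integers m and n, sum_{j=0}^{2n} (-1)^j q^{mj} (2n choose j)_q = (q;q^2)_n * sum_{k=0}^{floor(m/2)} q^{2k(2k-1)/2} (m choose 2k)_q (q^{2n-2k+2}; q^2)_k. In particular, (q;q^2)_n divides r_{2n}(-q^m, q) in Z[q]. -/
import Mathlib


open Finset

/-- Gaussian (q-)binomial coefficient, defined over any commutative ring by the
Pascal-type recurrence `[n+1, k+1] = [n, k] + q^(k+1) * [n, k+1]`. -/
def qbinom {R : Type*} [CommRing R] (q : R) : ℕ → ℕ → R
  | _, 0 => 1
  | 0, _ + 1 => 0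
  | n + 1, k + 1 => qbinom q n k + q ^ (k + 1) * qbinom q n (k + 1)
variable {R : Type*} [CommRing R] (q : R)

lemma qbinom_zero_right (n : ℕ) : qbinom q n 0 = 1 := by cases n <;> rfl

lemma qbinom_succ_succ (n k : ℕ) :
    qbinom q (n+1) (k+1) = qbinom q n k + q ^ (k + 1) * qbinom q n (k + 1) := rfl

lemma qbinom_eq_zero : ∀ n k : ℕ, n < k → qbinom q n k = 0 := by
  intro n
  induction n with
  | zero => intro k hk; match k, hk with | k+1, _ => rfl
  | succ n ih =>
    intro k hk
    match k, hk with
    | k+1, hk =>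
      rw [qbinom_succ_succ, ih k (by omega), ih (k+1) (by omega)]
      ring

lemma qbinom_one_right (n : ℕ) : qbinom q n 1 = ∑ i ∈ range n, q ^ i := by
  induction n with
  | zero => simp [qbinom]
  | succ n ih =>
    rw [show (1:ℕ) = 0 + 1 from rfl, qbinom_succ_succ, qbinom_zero_right, ih]
    have h2 : (∑ i ∈ range (n+1), q ^ i) = q * ∑ i ∈ range n, q ^ i + 1 := by
      rw [Finset.sum_range_succ']
      simp [pow_succ, mul_comm, Finset.mul_sum]
    linear_combination -h2

lemma qbinom_pascalB : ∀ n k : ℕ,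
    qbinom q (n+1) (k+1) = q ^ (n - k) * qbinom q n k + qbinom q n (k+1) := by
  intro n
  induction n with
  | zero =>
    intro k
    match k with
    | 0 => simp [qbinom]
    | k+1 =>
      rw [qbinom_succ_succ, qbinom_eq_zero q 0 (k+1) (by omega),
        qbinom_eq_zero q 0 (k+1+1) (by omega)]
      ring
  | succ n ih =>
    intro k
    match k with
    | 0 =>
      show qbinom q (n+2) 1 = q ^ (n+1) * qbinom q (n+1) 0 + qbinom q (n+1) 1
      rw [qbinom_one_right, qbinom_one_right, qbinom_zero_right, Finset.sum_range_succ]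
      ring
    | k+1 =>
      have hL : qbinom q (n+1+1) (k+1+1) =
          (q ^ (n-k) * qbinom q n k + qbinom q n (k+1)) +
            q ^ (k+2) * (q ^ (n-(k+1)) * qbinom q n (k+1) + qbinom q n (k+2)) := by
        rw [qbinom_succ_succ, ih k, ih (k+1)]
      have hR : q ^ (n+1-(k+1)) * qbinom q (n+1) (k+1) + qbinom q (n+1) (k+1+1) =
          q ^ (n-k) * (qbinom q n k + q ^ (k+1) * qbinom q n (k+1)) +
            (qbinom q n (k+1) + q ^ (k+2) * qbinom q n (k+2)) := by
        rw [qbinom_succ_succ, qbinom_succ_succ, show n+1-(k+1) = n-k by omega]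
      rw [hL, hR]
      by_cases hkn : k < n
      · have e1 : q ^ (k+2) * q ^ (n-(k+1)) = q ^ (n+1) := by
          rw [← pow_add, show k+2+(n-(k+1)) = n+1 by omega]
        have e2 : q ^ (n-k) * q ^ (k+1) = q ^ (n+1) := by
          rw [← pow_add, show n-k+(k+1) = n+1 by omega]
        linear_combination qbinom q n (k+1) * e1 - qbinom q n (k+1) * e2
      · rw [qbinom_eq_zero q n (k+1) (by omega)]
        ring

def Tq (q : R) (m N : ℕ) : R := ∑ j ∈ range (N+1), (-1)^j * q^(m*j) * qbinom q N j

lemma sum_shift (f : ℕ → R) (N : ℕ) (h0 : f (N+1) = 0) :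
    ∑ k ∈ range (N+1), f (k+1) = (∑ j ∈ range (N+1), f j) - f 0 := by
  rw [eq_sub_iff_add_eq, ← Finset.sum_range_succ' f (N+1), Finset.sum_range_succ, h0, add_zero]

lemma Tq_rec1 (m N : ℕ) :
    Tq q m (N+1) = Tq q (m+1) N - q ^ m * Tq q m N := by
  have key : ∀ k : ℕ, (-1:R)^(k+1) * q^(m*(k+1)) * qbinom q (N+1) (k+1)
      = -(q^m * ((-1:R)^k * q^(m*k) * qbinom q N k))
        + (-1:R)^(k+1) * q^((m+1)*(k+1)) * qbinom q N (k+1) := by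
    intro k
    rw [qbinom_succ_succ, show m*(k+1) = m*k+m by ring,
      show (m+1)*(k+1) = (m*k+m)+(k+1) by ring, pow_add, pow_add, pow_add]
    ring
  unfold Tq
  rw [Finset.sum_range_succ']
  simp only [key]
  rw [Finset.sum_add_distrib, Finset.sum_neg_distrib, ← Finset.mul_sum,
    sum_shift (fun j => (-1:R)^j * q^((m+1)*j) * qbinom q N j) N
      (by simp [qbinom_eq_zero q N (N+1) (by omega)])]
  simp [qbinom_zero_right]
  ring

lemma Tq_rec2 (m N : ℕ) :
    Tq q (m+1) (N+1) = Tq q (m+1) N - q ^ (N+1+m) * Tq q m N := by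
  have key : ∀ k ∈ range (N+1), (-1:R)^(k+1) * q^((m+1)*(k+1)) * qbinom q (N+1) (k+1)
      = -(q^(N+1+m) * ((-1:R)^k * q^(m*k) * qbinom q N k))
        + (-1:R)^(k+1) * q^((m+1)*(k+1)) * qbinom q N (k+1) := by
    intro k hk
    have hkN : k ≤ N := by simpa using Nat.lt_succ_iff.mp (Finset.mem_range.mp hk)
    rw [qbinom_pascalB]
    have e : q^((m+1)*(k+1)) * q^(N-k) = q^(N+1+m) * q^(m*k) := by
      rw [← pow_add, ← pow_add, show (m+1)*(k+1)+(N-k) = N+1+m+m*k by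
        have : N - k + k = N := by omega
        nlinarith [this]]
    linear_combination ((-1:R)^(k+1) * qbinom q N k) * e
  unfold Tq
  rw [Finset.sum_range_succ']
  rw [Finset.sum_congr rfl key]
  rw [Finset.sum_add_distrib, Finset.sum_neg_distrib, ← Finset.mul_sum,
    sum_shift (fun j => (-1:R)^j * q^((m+1)*j) * qbinom q N j) N
      (by simp [qbinom_eq_zero q N (N+1) (by omega)])]
  simp [qbinom_zero_right]
  ring

def Pprod (q : R) (n k : ℕ) : R := ∏ i ∈ range k, (1 - q^(2*(n+1-k)+2*i))

lemma Pprod_succ (n k : ℕ) :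
    q^(2*k) * Pprod q n (k+1) = (q^(2*k) - q^(2*n)) * Pprod q n k := by
  by_cases hk : k ≤ n
  · have h1 : Pprod q n (k+1) = Pprod q n k * (1 - q^(2*(n-k))) := by
      rw [Pprod, Finset.prod_range_succ']
      congr 1
      · rw [Pprod]
        apply Finset.prod_congr rfl
        intro i _
        congr 2
        omega
      · congr 2
        omega
    rw [h1]
    have h2 : q^(2*k) * q^(2*(n-k)) = q^(2*n) := by
      rw [← pow_add]
      congr 1
      omega
    linear_combination -(Pprod q n k) * h2
  · have h0 : Pprod q n (k+1) = 0 := by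
      apply Finset.prod_eq_zero (Finset.mem_range.mpr (by omega : 0 < k+1))
      rw [show 2*(n+1-(k+1))+2*0 = 0 by omega, pow_zero]
      ring
    have h0' : Pprod q n k = 0 := by
      apply Finset.prod_eq_zero (Finset.mem_range.mpr (by omega : 0 < k))
      rw [show 2*(n+1-k)+2*0 = 0 by omega, pow_zero]
      ring
    rw [h0, h0']
    ring

lemma ediv (k : ℕ) : 2*k*(2*k-1)/2 = k*(2*k-1) := by
  rw [mul_assoc, Nat.mul_div_cancel_left _ (by norm_num : 0 < 2)]

lemma esucc (k : ℕ) : (k+1)*(2*(k+1)-1) = k*(2*k-1) + (4*k+1) := by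
  cases k with
  | zero => simp
  | succ j =>
    rw [show 2*(j+1+1)-1 = 2*j+3 by omega, show 2*(j+1)-1 = 2*j+1 by omega]
    ring

def Fq (q : R) (n m : ℕ) : R :=
  ∑ k ∈ range (m/2+1), q^(2*k*(2*k-1)/2) * qbinom q m (2*k) * Pprod q n k

lemma Fq_ext (n m R0 : ℕ) (h : m/2+1 ≤ R0) :
    Fq q n m = ∑ k ∈ range R0, q^(2*k*(2*k-1)/2) * qbinom q m (2*k) * Pprod q n k := by
  rw [Fq]
  apply Finset.sum_subset (Finset.range_subset_range.mpr h)
  intro k hk hk2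
  rw [qbinom_eq_zero q m (2*k) (by
    simp only [Finset.mem_range] at hk hk2
    omega)]
  ring

/-- the telescoping gadget -/
def gtel (q : R) (n m : ℕ) : ℕ → R
  | 0 => 0
  | k+1 => q^(m+1) * (q^(k*(2*k-1) + 2*k) - q^(k*(2*k-1) + 2*n)) * qbinom q m (2*k) * Pprod q n k

lemma Fq_rec (n m : ℕ) :
    Fq q n (m+2) = (1 + q^(m+1)) * Fq q n (m+1) - q^(2*n+1+m) * Fq q n m := by
  have key : ∀ k ∈ range (m/2+2),
      q^(2*k*(2*k-1)/2) * qbinom q (m+2) (2*k) * Pprod q n k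
      = ((1 + q^(m+1)) * (q^(2*k*(2*k-1)/2) * qbinom q (m+1) (2*k) * Pprod q n k)
          - q^(2*n+1+m) * (q^(2*k*(2*k-1)/2) * qbinom q m (2*k) * Pprod q n k))
        + (gtel q n m k - gtel q n m (k+1)) := by
    intro k hk
    match k with
    | 0 =>
      simp only [gtel, Nat.mul_zero, qbinom_zero_right, Pprod, Finset.range_zero,
        Finset.prod_empty, Nat.zero_mul, Nat.zero_div, pow_zero, Nat.zero_add]
      have hp : q^(m+1) * q^(2*n) = q^(2*n+1+m) := by rw [← pow_add]; congr 1; omega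
      linear_combination -hp
    | k+1 =>
      have hk2 : 2*k ≤ m := by
        simp only [Finset.mem_range] at hk
        omega
      have hB : qbinom q (m+2) (2*(k+1)) = q^(m+1-(2*k+1)) * qbinom q (m+1) (2*k+1)
          + qbinom q (m+1) (2*(k+1)) := by
        have h := qbinom_pascalB q (m+1) (2*k+1)
        rw [show 2*(k+1) = 2*k+1+1 by ring]
        exact h
      have hA1 : qbinom q (m+1) (2*k+1) = qbinom q m (2*k) + q^(2*k+1) * qbinom q m (2*k+1) := by
        rw [show (2*k+1 : ℕ) = 2*k+1 from rfl]
        exact qbinom_succ_succ q m (2*k)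
      have hA2 : qbinom q (m+1) (2*(k+1)) = qbinom q m (2*k+1) + q^(2*k+2) * qbinom q m (2*k+2) := by
        rw [show 2*(k+1) = (2*k+1)+1 by ring]
        exact qbinom_succ_succ q m (2*k+1)
      have hP := Pprod_succ q n k
      simp only [gtel, ediv]
      rw [hB, hA1, hA2, esucc]
      obtain ⟨d, rfl⟩ : ∃ d, m = 2*k+d := ⟨m - 2*k, by omega⟩
      rw [show 2*k+d+1-(2*k+1) = d by omega]
      rw [show 2*(k+1) = 2*k+2 by ring]
      linear_combination (q^(2*k+d+1) * q^(k*(2*k-1)) * qbinom q (2*k+d) (2*k)) * hP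
  rw [Fq_ext q n (m+2) (m/2+2) (by omega), Fq_ext q n (m+1) (m/2+2) (by omega),
    Fq_ext q n m (m/2+2) (by omega)]
  rw [Finset.sum_congr rfl key, Finset.sum_add_distrib, Finset.sum_range_sub']
  have hg0 : gtel q n m 0 = 0 := rfl
  have hgR : gtel q n m (m/2+2) = 0 := by
    show gtel q n m ((m/2+1)+1) = 0
    rw [gtel, qbinom_eq_zero q m (2*(m/2+1)) (by omega)]
    ring
  rw [hg0, hgR, Finset.sum_sub_distrib, ← Finset.mul_sum, ← Finset.mul_sum]
  ring

lemma Tq_contig (m N : ℕ) :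
    Tq q (m+1+1) N = (1 + q^(m+1)) * Tq q (m+1) N - q^(N+1+m) * Tq q m N := by
  have h1 := Tq_rec1 q (m+1) N
  have h2 := Tq_rec2 q m N
  linear_combination h2 - h1

lemma Tq_base (n : ℕ) :
    Tq q 0 (2*n) = (∏ i ∈ range n, (1 - q^(2*i+1)))
      ∧ Tq q 1 (2*n) = ∏ i ∈ range n, (1 - q^(2*i+1)) := by
  induction n with
  | zero => constructor <;> simp [Tq, qbinom]
  | succ n ih =>
    have a1 := Tq_rec1 q 0 (2*n)
    have b1 := Tq_rec2 q 0 (2*n)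
    have a2 := Tq_rec1 q 0 (2*n+1)
    have b2 := Tq_rec2 q 0 (2*n+1)
    rw [ih.1, ih.2] at a1 b1
    rw [show 2*(n+1) = (2*n+1)+1 by omega, Finset.prod_range_succ]
    constructor
    · linear_combination a2 + b1 - a1
    · linear_combination b2 + b1 - q^(2*n+1+1+0) * a1

lemma Fq_zero (n : ℕ) : Fq q n 0 = 1 := by
  simp [Fq, Pprod, qbinom_zero_right]

lemma Fq_one (n : ℕ) : Fq q n 1 = 1 := by
  simp [Fq, Pprod, qbinom_zero_right]

lemma main_pair (n : ℕ) : ∀ m : ℕ,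
    Tq q m (2*n) = (∏ i ∈ range n, (1 - q^(2*i+1))) * Fq q n m
      ∧ Tq q (m+1) (2*n) = (∏ i ∈ range n, (1 - q^(2*i+1))) * Fq q n (m+1) := by
  intro m
  induction m with
  | zero =>
    refine ⟨?_, ?_⟩
    · rw [(Tq_base q n).1, Fq_zero, mul_one]
    · rw [(Tq_base q n).2, Fq_one, mul_one]
  | succ m ih =>
    refine ⟨ih.2, ?_⟩
    have hc : Tq q (m+2) (2*n)
        = (1 + q^(m+1)) * Tq q (m+1) (2*n) - q^(2*n+1+m) * Tq q m (2*n) :=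
      Tq_contig q m (2*n)
    have hf := Fq_rec q n m
    show Tq q (m+2) (2*n) = (∏ i ∈ range n, (1 - q^(2*i+1))) * Fq q n (m+2)
    linear_combination hc - (∏ i ∈ range n, (1 - q^(2*i+1))) * hf
      + (1 + q^(m+1)) * ih.2 - q^(2*n+1+m) * ih.1

open Polynomial in
theorem stmt17 (m n : ℕ) :
    (∑ j ∈ Finset.range (2 * n + 1), (-1 : ℤ[X]) ^ j * X ^ (m * j) * qbinom (X : ℤ[X]) (2 * n) j =
      (∏ i ∈ Finset.range n, (1 - (X : ℤ[X]) ^ (2 * i + 1))) *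
        ∑ k ∈ Finset.range (m / 2 + 1),
          X ^ (2 * k * (2 * k - 1) / 2) * qbinom (X : ℤ[X]) m (2 * k) *
            ∏ i ∈ Finset.range k, (1 - (X : ℤ[X]) ^ (2 * (n + 1 - k) + 2 * i))) ∧
    (∏ i ∈ Finset.range n, (1 - (X : ℤ[X]) ^ (2 * i + 1))) ∣
      ∑ j ∈ Finset.range (2 * n + 1), (-1 : ℤ[X]) ^ j * X ^ (m * j) * qbinom (X : ℤ[X]) (2 * n) j := by
  have h := (main_pair (X : ℤ[X]) n m).1
  have h' : (∑ j ∈ Finset.range (2 * n + 1), (-1 : ℤ[X]) ^ j * X ^ (m * j) * qbinom (X : ℤ[X]) (2 * n) j)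
      = (∏ i ∈ Finset.range n, (1 - (X : ℤ[X]) ^ (2 * i + 1))) *
        ∑ k ∈ Finset.range (m / 2 + 1),
          X ^ (2 * k * (2 * k - 1) / 2) * qbinom (X : ℤ[X]) m (2 * k) *
            ∏ i ∈ Finset.range k, (1 - (X : ℤ[X]) ^ (2 * (n + 1 - k) + 2 * i)) := h
  exact ⟨h', h'.symm ▸ Dvd.intro _ rfl⟩
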